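/- Let m ≥ 2 be even, n ≥ 1, X ≥ 1, d = m(n-1)+2X-1. Every sum φ_j + γ_{j'} with j ∈ {X+1,...,X+m}, j' ∈ {X+1,...,X+n} (bottom-right quadrant of the pole number table) is at least mn + 4X - 3, while every other sum φ_j + γ_{j'} (i.e., with j ≤ X or j' ≤ X) is at most mn + 4X - 4. -/
import Mathlib


/-- The `j`-th entry of `φ = (0, 2, …, 2X-2, d, d+1, …, d+m-1)` for `1 ≤ j ≤ m + X`. -/
def phiEntry (X d j : ℕ) : ℕ := if j ≤ X then 2 * (j - 1) else d + (j - X - 1)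

/-- The `j'`-th entry of `γ = (0, 2, …, 2X-2, m+2X-2, 2m+2X-2, …, mn+2X-2)`
for `1 ≤ j' ≤ n + X`. -/
def gammaEntry (m X j : ℕ) : ℕ := if j ≤ X then 2 * (j - 1) else (j - X) * m + 2 * X - 2

/-- Every sum in the bottom-right quadrant of the pole number table is at least
`mn + 4X - 3`, while every other sum is at most `mn + 4X - 4`. -/
theorem pole_number_table_quadrants (m n X : ℕ) (hm : 2 ≤ m) (hme : Even m)
    (hn : 1 ≤ n) (hX : 1 ≤ X) (d : ℕ) (hd : d = m * (n - 1) + 2 * X - 1) :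
    ∀ j j' : ℕ, 1 ≤ j → j ≤ m + X → 1 ≤ j' → j' ≤ n + X →
      ((X < j ∧ X < j') → m * n + 4 * X - 3 ≤ phiEntry X d j + gammaEntry m X j') ∧
      ((j ≤ X ∨ j' ≤ X) → phiEntry X d j + gammaEntry m X j' ≤ m * n + 4 * X - 4) := by
  intro j j' hj1 hj2 hj1' hj2'
  unfold phiEntry gammaEntry
  have hmn : m * (n - 1) + m = m * n := by
    cases n with
    | zero => omega
    | succ k => simp [Nat.mul_succ]
  constructor
  · rintro ⟨hjX, hj'X⟩
    rw [if_neg (by omega), if_neg (by omega)]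
    have h1 : 1 * m ≤ (j' - X) * m := Nat.mul_le_mul_right _ (by omega)
    omega
  · intro h
    by_cases hj : j ≤ X <;> by_cases hj' : j' ≤ X
    · rw [if_pos hj, if_pos hj']; omega
    · rw [if_pos hj, if_neg hj']
      have h2 : (j' - X) * m ≤ n * m := Nat.mul_le_mul_right _ (by omega)
      have h3 : n * m = m * n := Nat.mul_comm n m
      omega
    · rw [if_neg hj, if_pos hj']; omega
    · omega
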